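/- Let W be a finite Coxeter group, S its set of reflections, and for each irreducible representation τ of W let p(τ) be the scalar by which Σ_{s∈S} s acts on τ. Then for every irreducible τ not isomorphic to the trivial or the sign representation, −|S| < p(τ) < |S|; moreover p(triv) = |S| and p(sign) = −|S|. -/

import Mathlib

open Module

lemma trace_involution {V : Type*} [AddCommGroup V] [Module ℂ V] [FiniteDimensional ℂ V]
    (f : Module.End ℂ V) (hf : f * f = 1) :
    ∃ a b : ℕ, a + b = finrank ℂ V ∧ LinearMap.trace ℂ V f = (a : ℂ) - b := by
  have hfv : ∀ v : V, f (f v) = v := fun v => by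
    have := congrArg (fun g : Module.End ℂ V => g v) hf
    simpa using this
  set p : Module.End ℂ V := (2⁻¹ : ℂ) • (1 + f) with hpdef
  set q : Module.End ℂ V := (2⁻¹ : ℂ) • (1 - f) with hqdef
  have hp : p ∘ₗ p = p := by
    ext v
    simp only [hpdef, LinearMap.comp_apply, LinearMap.smul_apply, LinearMap.add_apply,
      Module.End.one_apply, map_smul, map_add, hfv]
    module
  have hq : q ∘ₗ q = q := by
    ext v
    simp only [hqdef, LinearMap.comp_apply, LinearMap.smul_apply, LinearMap.sub_apply,
      Module.End.one_apply, map_smul, map_add, map_sub, hfv]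
    module
  obtain ⟨P, hP⟩ := (LinearMap.isProj_iff_isIdempotentElem p).mpr hp
  obtain ⟨Q, hQ⟩ := (LinearMap.isProj_iff_isIdempotentElem q).mpr hq
  refine ⟨finrank ℂ P, finrank ℂ Q, ?_, ?_⟩
  · have hpq : p + q = 1 := by
      ext v
      simp only [hpdef, hqdef, LinearMap.add_apply, LinearMap.smul_apply, LinearMap.sub_apply,
        Module.End.one_apply]
      module
    have h1 : LinearMap.trace ℂ V p + LinearMap.trace ℂ V q = (finrank ℂ V : ℂ) := by
      rw [← map_add, hpq]
      simpa using LinearMap.trace_id ℂ V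
    rw [hP.trace, hQ.trace] at h1
    exact_mod_cast h1
  · have hfpq : f = p - q := by
      ext v
      simp only [hpdef, hqdef, LinearMap.sub_apply, LinearMap.smul_apply, LinearMap.add_apply,
        Module.End.one_apply]
      module
    rw [hfpq, map_sub, hP.trace, hQ.trace]

/-- let `W` be a finite Coxeter group with set of reflections `S`
(involutions generating `W`), `ε` its sign character (`ε(s) = -1` for all
reflections `s`), and for an irreducible representation `τ` let `p(τ)` be the
scalar by which `Σ_{s∈S} s` acts, so `Σ_{s∈S} Tr(s,τ) = p(τ)·dim τ`.  If `τ`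
is neither trivial nor sign (on `S`), then `-|S| < p(τ) < |S|`; moreover
`p(triv) = |S|` and `p(sign) = -|S|`. -/
theorem stmt3 {W : Type} [Group W] [Fintype W] (S : Finset W)
    (hgen : Subgroup.closure (S : Set W) = ⊤)
    (hs : ∀ s ∈ S, s * s = 1)
    (ε : W →* ℂˣ) (hε : ∀ s ∈ S, (ε s : ℂ) = -1)
    (V : FDRep ℂ W) [CategoryTheory.Simple V]
    (hnt : ¬ ∀ s ∈ S, V.character s = (finrank ℂ V : ℂ))
    (hns : ¬ ∀ s ∈ S, V.character s = -(finrank ℂ V : ℂ)) :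
    (∀ m : ℤ, (∑ s ∈ S, V.character s) = (m : ℂ) * (finrank ℂ V : ℂ) →
        -(S.card : ℤ) < m ∧ m < (S.card : ℤ))
      ∧ (∑ _s ∈ S, (1 : ℂ)) = (S.card : ℂ)
      ∧ (∑ s ∈ S, (ε s : ℂ)) = -(S.card : ℂ) := by
  refine ⟨?_, by simp, ?_⟩
  · intro m hm
    set d : ℕ := finrank ℂ V with hd
    -- the dimension is positive, otherwise `hnt` is contradicted
    have hdpos : 0 < d := by
      rcases Nat.eq_zero_or_pos d with h0 | h
      · exfalso
        apply hnt
        intro s hsS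
        haveI : Subsingleton V := by
          rw [← finrank_zero_iff (R := ℂ)]
          exact h0
        have : V.ρ s = 0 := LinearMap.ext fun x => Subsingleton.elim _ _
        simp [FDRep.character, this, ← hd, h0]
      · exact h
    have key : ∀ s ∈ S, ∃ k : ℤ, V.character s = (k : ℂ) ∧ -(d : ℤ) ≤ k ∧ k ≤ (d : ℤ) := by
      intro s hsS
      have hinv : V.ρ s * V.ρ s = 1 := by
        rw [← map_mul, hs s hsS, map_one]
      obtain ⟨a, b, hab, htr⟩ := trace_involution (V.ρ s) hinv
      refine ⟨(a : ℤ) - b, ?_, ?_, ?_⟩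
      · rw [FDRep.character, htr]; push_cast; ring
      · omega
      · omega
    choose! k hk hk1 hk2 using key
    have hsumZ : ∑ s ∈ S, k s = m * d := by
      have : ((∑ s ∈ S, k s : ℤ) : ℂ) = ((m * d : ℤ) : ℂ) := by
        push_cast
        rw [← hm]
        exact (Finset.sum_congr rfl fun s h => (hk s h).symm)
      exact_mod_cast this
    constructor
    · by_contra hcon
      push_neg at hcon
      push_neg at hns
      obtain ⟨s₀, hs₀, hne⟩ := hns
      have hne' : k s₀ ≠ -(d : ℤ) := by
        intro h
        apply hne
        rw [hk s₀ hs₀, h]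
        push_cast
        ring
      have hlt : -(d : ℤ) < k s₀ := lt_of_le_of_ne (hk1 s₀ hs₀) (Ne.symm hne')
      have hstrict : ∑ s ∈ S, (-(d : ℤ)) < ∑ s ∈ S, k s :=
        Finset.sum_lt_sum (fun s h => hk1 s h) ⟨s₀, hs₀, hlt⟩
      rw [Finset.sum_const, hsumZ] at hstrict
      simp only [nsmul_eq_mul] at hstrict
      have h1 : (S.card : ℤ) * (-(d : ℤ)) < m * d := by
        simpa [mul_comm] using hstrict
      have h2 : m * (d : ℤ) ≤ (-(S.card : ℤ)) * d := by
        apply mul_le_mul_of_nonneg_right hcon (by positivity)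
      nlinarith
    · by_contra hcon
      push_neg at hcon
      push_neg at hnt
      obtain ⟨s₀, hs₀, hne⟩ := hnt
      have hne' : k s₀ ≠ (d : ℤ) := by
        intro h
        apply hne
        rw [hk s₀ hs₀, h]
        push_cast
        ring
      have hlt : k s₀ < (d : ℤ) := lt_of_le_of_ne (hk2 s₀ hs₀) hne'
      have hstrict : ∑ s ∈ S, k s < ∑ s ∈ S, ((d : ℤ)) :=
        Finset.sum_lt_sum (fun s h => hk2 s h) ⟨s₀, hs₀, hlt⟩
      rw [Finset.sum_const, hsumZ] at hstrict
      simp only [nsmul_eq_mul] at hstrict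
      have h2 : (S.card : ℤ) * d ≤ m * d := by
        apply mul_le_mul_of_nonneg_right hcon (by positivity)
      nlinarith
  · rw [Finset.sum_congr rfl hε]
    simp
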